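/- As T → ∞ over the integers, (1/(T−1)²) · Σ_{k=1}^{T−1} Σ_{ℓ=1}^{T−1} g(k/T, ℓ/T)² / ( m(k/T) · m(ℓ/T) ) converges to π²/3 − 3. That is, for the heteroscedasticity weights w_k = m(k/T)^{−2}, the quantity D_T(w) converges to D_wls = π²/3 − 3. -/

import Mathlib

/-- `m(s) = s(1-s)`. -/
noncomputable def m (s : ℝ) : ℝ := s * (1 - s)

/-- `g(s,t) = min(s,t)·(1 - max(s,t))`. -/
noncomputable def g (s t : ℝ) : ℝ := min s t * (1 - max s t)

open Finset Filter Real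


noncomputable def Hh (n : ℕ) : ℝ := ∑ i ∈ Finset.range n, (1:ℝ)/(i+1)
noncomputable def Hs (n : ℕ) : ℝ := ∑ i ∈ Finset.range n, (1:ℝ)/((i:ℝ)+1)^2

lemma Hh_succ (n : ℕ) : Hh (n+1) = Hh n + 1/((n:ℝ)+1) := Finset.sum_range_succ _ n
lemma Hs_succ (n : ℕ) : Hs (n+1) = Hs n + 1/((n:ℝ)+1)^2 := Finset.sum_range_succ _ n

lemma sum_inv_reflect (n : ℕ) : ∑ k ∈ range n, (1:ℝ)/((n:ℝ)-k) = Hh n := by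
  rw [Hh, ← Finset.sum_range_reflect (fun i => (1:ℝ)/((i:ℝ)+1)) n]
  apply Finset.sum_congr rfl
  intro k hk
  rw [Finset.mem_range] at hk
  congr 1
  have : ((n - 1 - k : ℕ) : ℝ) = (n : ℝ) - 1 - k := by
    have h : (n - 1 - k : ℕ) + 1 + k = n := by omega
    have h2 := congrArg (fun j : ℕ => (j : ℝ)) h
    push_cast at h2
    linarith
  rw [this]; ring

lemma sum_Hh (n : ℕ) : ∑ i ∈ range n, Hh (i+1) = ((n:ℝ)+1) * Hh n - n := by
  induction n with
  | zero => simp [Hh]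
  | succ n ih =>
    rw [Finset.sum_range_succ, ih, Hh_succ]
    have : ((n:ℝ)+1) ≠ 0 := by positivity
    field_simp
    push_cast
    ring

lemma sum_pf (n : ℕ) : ∑ i ∈ range n, (1:ℝ)/((i+1)*((n:ℝ)-i)) = 2 * Hh n / ((n:ℝ)+1) := by
  have h1 : ∑ i ∈ range n, (1:ℝ)/((i+1)*((n:ℝ)-i))
      = ∑ i ∈ range n, (1/((n:ℝ)+1)) * ((1:ℝ)/(i+1) + 1/((n:ℝ)-i)) := by
    apply Finset.sum_congr rfl
    intro i hi
    rw [Finset.mem_range] at hi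
    have hi1 : ((i:ℝ)+1) ≠ 0 := by positivity
    have hn1 : ((n:ℝ)+1) ≠ 0 := by positivity
    have hni : ((n:ℝ)-i) ≠ 0 := by
      have : (i:ℝ) < n := by exact_mod_cast hi
      linarith
    field_simp
    ring
  rw [h1, ← Finset.mul_sum, Finset.sum_add_distrib, sum_inv_reflect]
  show (1/((n:ℝ)+1)) * (Hh n + Hh n) = _
  ring

lemma sum_QH (n : ℕ) : ∑ i ∈ range n, Hh (n - (i+1)) / ((i:ℝ)+1) = Hh n ^ 2 - Hs n := by
  induction n with
  | zero => simp [Hh, Hs]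
  | succ n ih =>
    rw [Finset.sum_range_succ]
    
    have h0 : Hh (n + 1 - (n+1)) = 0 := by
      have : n + 1 - (n+1) = 0 := by omega
      rw [this]; simp [Hh]
    rw [h0]
    have h1 : ∑ i ∈ range n, Hh (n + 1 - (i+1)) / ((i:ℝ)+1)
        = ∑ i ∈ range n, (Hh (n - (i+1)) / ((i:ℝ)+1) + (1:ℝ)/(((i:ℝ)+1)*((n:ℝ)-i))) := by
      apply Finset.sum_congr rfl
      intro i hi
      rw [Finset.mem_range] at hi
      have e1 : n + 1 - (i+1) = (n - (i+1)) + 1 := by omega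
      have e2 : ((n - (i+1) : ℕ) : ℝ) + 1 = (n:ℝ) - i := by
        have h : (n - (i+1) : ℕ) + (i + 1) = n := by omega
        have h2 := congrArg (fun j : ℕ => (j : ℝ)) h
        push_cast at h2
        linarith
      have hi1 : ((i:ℝ)+1) ≠ 0 := by positivity
      have hni : ((n:ℝ)-(i:ℝ)) ≠ 0 := by
        have : (i:ℝ) < n := by exact_mod_cast hi
        linarith
      rw [e1, Hh_succ, e2]
      field_simp
    rw [h1, Finset.sum_add_distrib, ih, sum_pf, Hh_succ, Hs_succ]
    have hn1 : ((n:ℝ)+1) ≠ 0 := by positivity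
    field_simp
    ring

lemma sum_inv_sub (n : ℕ) : ∀ l ≤ n, ∑ k ∈ range l, (1:ℝ)/((n:ℝ)-k) = Hh n - Hh (n - l) := by
  intro l hl
  induction l with
  | zero => simp
  | succ l ih =>
    have hl' : l ≤ n := by omega
    rw [Finset.sum_range_succ, ih hl']
    have e1 : n - l = (n - (l+1)) + 1 := by omega
    have e2 : ((n - (l+1) : ℕ) : ℝ) + 1 = (n:ℝ) - l := by
      have h : (n - (l+1) : ℕ) + (l + 1) = n := by omega
      have h2 := congrArg (fun j : ℕ => (j : ℝ)) h
      push_cast at h2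
      linarith
    rw [e1, Hh_succ, e2]
    ring

lemma double_sum_symm (F : ℕ → ℕ → ℝ) (hsymm : ∀ k l, F k l = F l k) (n : ℕ) :
    ∑ k ∈ range n, ∑ l ∈ range n, F k l
      = ∑ k ∈ range n, F k k + 2 * ∑ l ∈ range n, ∑ k ∈ range l, F k l := by
  induction n with
  | zero => simp
  | succ n ih =>
    have h1 : ∑ k ∈ range (n+1), ∑ l ∈ range (n+1), F k l
        = (∑ k ∈ range n, ∑ l ∈ range n, F k l) + ∑ l ∈ range n, F n l
          + (∑ k ∈ range n, F k n + F n n) := by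
      rw [Finset.sum_range_succ]
      rw [Finset.sum_congr rfl (fun k _ => Finset.sum_range_succ (fun l => F k l) n)]
      rw [Finset.sum_add_distrib, Finset.sum_range_succ]
      ring
    have h2 : ∑ l ∈ range n, F n l = ∑ k ∈ range n, F k n :=
      Finset.sum_congr rfl (fun k _ => hsymm n k)
    rw [h1, h2, ih, Finset.sum_range_succ, Finset.sum_range_succ (fun l => ∑ k ∈ range l, F k l)]
    ring


lemma tri_pt (T k l : ℕ) (hk : 1 ≤ k) (hkl : k < l) (hl : l ≤ T - 1) (hT : 2 ≤ T) :
    (g ((k : ℝ) / T) ((l : ℝ) / T)) ^ 2 / (m ((k : ℝ) / T) * m ((l : ℝ) / T))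
      = (T:ℝ)^2/(((T:ℝ)-k)*l) - (T:ℝ)/((T:ℝ)-k) - (T:ℝ)/l + 1 := by
  have hT0 : (0:ℝ) < T := by
    have : 0 < T := by omega
    exact_mod_cast this
  have ha : (0:ℝ) < k := by exact_mod_cast hk
  have hab : (k:ℝ) < l := by exact_mod_cast hkl
  have hlT : (l:ℝ) < T := by
    have : l < T := by omega
    exact_mod_cast this
  have hkT : (k:ℝ) < T := by linarith
  have hmin : min ((k:ℝ)/T) ((l:ℝ)/T) = (k:ℝ)/T := min_eq_left (by gcongr)
  have hmax : max ((k:ℝ)/T) ((l:ℝ)/T) = (l:ℝ)/T := max_eq_right (by gcongr)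
  rw [g, m, m, hmin, hmax]
  have h1 : (k:ℝ) ≠ 0 := ne_of_gt ha
  have h2 : (0:ℝ) < l := lt_trans ha hab
  have h3 : (l:ℝ) ≠ 0 := ne_of_gt h2
  have h4 : (T:ℝ) ≠ 0 := ne_of_gt hT0
  have h5 : (T:ℝ) - k ≠ 0 := by linarith
  have h6 : (T:ℝ) - l ≠ 0 := by linarith
  have e1 : (1:ℝ) - (k:ℝ)/T = ((T:ℝ)-k)/T := by field_simp
  have e2 : (1:ℝ) - (l:ℝ)/T = ((T:ℝ)-l)/T := by field_simp
  rw [e1, e2]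
  field_simp
  ring

lemma diag_pt (T k : ℕ) (hk : 1 ≤ k) (hkT : k ≤ T - 1) (hT : 2 ≤ T) :
    (g ((k : ℝ) / T) ((k : ℝ) / T)) ^ 2 / (m ((k : ℝ) / T) * m ((k : ℝ) / T)) = 1 := by
  have hT0 : (0:ℝ) < T := by
    have : 0 < T := by omega
    exact_mod_cast this
  have ha : (0:ℝ) < k := by exact_mod_cast hk
  have hkT' : (k:ℝ) < T := by
    have : k < T := by omega
    exact_mod_cast this
  have hm : m ((k:ℝ)/T) ≠ 0 := by
    rw [m]
    have h1 : 0 < (k:ℝ)/T := by positivity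
    have h2 : (k:ℝ)/T < 1 := by rw [div_lt_one hT0]; exact hkT'
    have : 0 < (k:ℝ)/T * (1 - (k:ℝ)/T) := by nlinarith
    exact ne_of_gt this
  rw [g, min_self, max_self, ← m]
  rw [show (m ((k:ℝ)/T))^2 = m ((k:ℝ)/T) * m ((k:ℝ)/T) from sq _]
  exact div_self (mul_ne_zero hm hm)

set_option maxHeartbeats 1000000 in
lemma key (T : ℕ) (hT : 2 ≤ T) :
    ∑ k ∈ Finset.Icc 1 (T - 1), ∑ l ∈ Finset.Icc 1 (T - 1),
        (g ((k : ℝ) / T) ((l : ℝ) / T)) ^ 2 / (m ((k : ℝ) / T) * m ((l : ℝ) / T))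
      = 2*(T:ℝ)^2 * Hs T - 3*(T:ℝ)^2 + 2*(T:ℝ) - 1 := by
  set n := T - 1 with hn
  have hn1 : 1 ≤ n := by omega
  have hcast : (n:ℝ) = (T:ℝ) - 1 := by
    have h : n + 1 = T := by omega
    have h2 := congrArg (fun j : ℕ => (j:ℝ)) h
    push_cast at h2; linarith
  have hIcc : Finset.Icc 1 n = Finset.Ico 1 (n+1) := by rw [Finset.Ico_add_one_right_eq_Icc]
  rw [hIcc]
  simp only [Finset.sum_Ico_eq_sum_range, Nat.add_sub_cancel]
  rw [double_sum_symm (fun k l =>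
      (g ((↑(1+k) : ℝ) / T) ((↑(1+l) : ℝ) / T)) ^ 2 /
        (m ((↑(1+k) : ℝ) / T) * m ((↑(1+l) : ℝ) / T)))
    (by intro k l; simp only [g, m]; rw [min_comm, max_comm]; ring) n]
  have hdiag : ∑ k ∈ range n,
      (g ((((1+k):ℕ):ℝ)/T) ((((1+k):ℕ):ℝ)/T))^2
        / (m ((((1+k):ℕ):ℝ)/T) * m ((((1+k):ℕ):ℝ)/T)) = (n:ℝ) := by
    rw [Finset.sum_congr rfl (fun k hk =>
      diag_pt T (1+k) (by omega)
        (by have := Finset.mem_range.mp hk; omega) hT)]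
    simp
  rw [hdiag]
  have hT0 : (T:ℝ) ≠ 0 := by
    have : 0 < T := by omega
    exact_mod_cast (ne_of_gt this)
  have hinner : ∀ l ∈ range n, (∑ k ∈ range l,
      (g ((((1+k):ℕ):ℝ)/T) ((((1+l):ℕ):ℝ)/T))^2
        / (m ((((1+k):ℕ):ℝ)/T) * m ((((1+l):ℕ):ℝ)/T)))
      = (T:ℝ)^2 * ((Hh n - Hh (n-l))/((l:ℝ)+1)) - (T:ℝ)*(Hh n - Hh (n-l))
        - (T:ℝ)*((l:ℝ)/((l:ℝ)+1)) + (l:ℝ) := by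
    intro l hl
    rw [Finset.mem_range] at hl
    have hl1 : ((l:ℝ)+1) ≠ 0 := by positivity
    have hstep : ∀ k ∈ range l,
        (g ((((1+k):ℕ):ℝ)/T) ((((1+l):ℕ):ℝ)/T))^2
          / (m ((((1+k):ℕ):ℝ)/T) * m ((((1+l):ℕ):ℝ)/T))
        = (T:ℝ)^2/((l:ℝ)+1) * ((1:ℝ)/((n:ℝ)-k)) - (T:ℝ)*((1:ℝ)/((n:ℝ)-k))
            - (T:ℝ)/((l:ℝ)+1) + 1 := by
      intro k hk
      rw [Finset.mem_range] at hk
      have h := tri_pt T (1+k) (1+l) (by omega) (by omega) (by omega) hT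
      rw [h]
      have hnk : (n:ℝ) - k ≠ 0 := by
        have : (k:ℝ) < n := by exact_mod_cast (by omega : k < n)
        linarith
      push_cast
      have e : (T:ℝ) - (1+(k:ℝ)) = (n:ℝ) - k := by rw [hcast]; ring
      rw [e]
      rw [div_mul_eq_div_div, div_div]
      field_simp
      ring
    rw [Finset.sum_congr rfl hstep, Finset.sum_add_distrib, Finset.sum_sub_distrib,
      Finset.sum_sub_distrib, ← Finset.mul_sum, ← Finset.mul_sum,
      sum_inv_sub n l (by omega), Finset.sum_const, Finset.sum_const, Finset.card_range]
    simp only [nsmul_eq_mul, mul_one]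
    ring
  rw [Finset.sum_congr rfl hinner, Finset.sum_add_distrib, Finset.sum_sub_distrib,
    Finset.sum_sub_distrib, ← Finset.mul_sum, ← Finset.mul_sum, ← Finset.mul_sum]
  have hHhdef : ∑ i ∈ range n, (1:ℝ)/((i:ℝ)+1) = Hh n := rfl
  have hS1 : ∑ l ∈ range n, (Hh n - Hh (n-l))/((l:ℝ)+1)
      = Hh n^2 - (Hh T^2 - Hs T) := by
    have hTn : T = n + 1 := by omega
    have hq := sum_QH T
    rw [hTn, Finset.sum_range_succ] at hq
    have h0 : Hh (n + 1 - (n+1)) = 0 := by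
      have : n + 1 - (n+1) = 0 := by omega
      rw [this]; simp [Hh]
    rw [h0] at hq
    simp only [Nat.succ_sub_succ] at hq
    rw [zero_div, add_zero, ← hTn] at hq
    have hsplit : ∑ l ∈ range n, (Hh n - Hh (n-l))/((l:ℝ)+1)
        = ∑ l ∈ range n, (Hh n * ((1:ℝ)/((l:ℝ)+1)) - Hh (n-l)/((l:ℝ)+1)) := by
      apply Finset.sum_congr rfl; intro l hl; ring
    rw [hsplit, Finset.sum_sub_distrib, ← Finset.mul_sum, hHhdef, hq]
    ring
  have hS2 : ∑ l ∈ range n, (Hh n - Hh (n-l)) = (n:ℝ) - Hh n := by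
    have hrefl : ∑ l ∈ range n, Hh (n-l) = ∑ l ∈ range n, Hh (l+1) := by
      rw [← Finset.sum_range_reflect (fun j => Hh (j+1)) n]
      exact Finset.sum_congr rfl (fun l hl => by
        have := Finset.mem_range.mp hl; congr 1; omega)
    rw [Finset.sum_sub_distrib, hrefl, sum_Hh, Finset.sum_const, Finset.card_range]
    simp only [nsmul_eq_mul]
    ring
  have hS3 : ∑ l ∈ range n, (l:ℝ)/((l:ℝ)+1) = (n:ℝ) - Hh n := by
    have hsplit : ∑ l ∈ range n, (l:ℝ)/((l:ℝ)+1)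
        = ∑ l ∈ range n, (1 - (1:ℝ)/((l:ℝ)+1)) := by
      apply Finset.sum_congr rfl; intro l hl
      have : ((l:ℝ)+1) ≠ 0 := by positivity
      field_simp
      ring
    rw [hsplit, Finset.sum_sub_distrib, hHhdef, Finset.sum_const, Finset.card_range]
    simp only [nsmul_eq_mul, mul_one]
  have hS4 : ∑ l ∈ range n, (l:ℝ) = (n:ℝ)*((n:ℝ)-1)/2 := by
    have h := Finset.sum_range_id_mul_two n
    have h2 := congrArg (fun j : ℕ => (j:ℝ)) h
    push_cast [Nat.cast_sub hn1] at h2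
    rw [← Nat.cast_sum] at h2
    push_cast at h2
    linarith
  rw [hS1, hS2, hS3, hS4]
  have hHT : Hh T = Hh n + 1/(T:ℝ) := by
    have h1 : T = n + 1 := by omega
    have h2 : ((n:ℝ)+1) = (T:ℝ) := by linarith
    rw [h1, Hh_succ, h2]
    push_cast
    rw [h2]
  rw [hHT, hcast]
  field_simp
  ring

/-- For the heteroscedasticity weights `w_k = m(k/T)⁻²`,
`D_T(w) = (1/(T-1)²) ∑_{k=1}^{T-1} ∑_{ℓ=1}^{T-1} g(k/T,ℓ/T)²/(m(k/T) m(ℓ/T))`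
converges to `D_wls = π²/3 - 3` as `T → ∞`. -/
theorem stmt9 :
    Filter.Tendsto
      (fun T : ℕ =>
        (((T : ℝ) - 1) ^ 2)⁻¹ *
          ∑ k ∈ Finset.Icc 1 (T - 1), ∑ l ∈ Finset.Icc 1 (T - 1),
            (g ((k : ℝ) / T) ((l : ℝ) / T)) ^ 2 / (m ((k : ℝ) / T) * m ((l : ℝ) / T)))
      Filter.atTop (nhds (Real.pi ^ 2 / 3 - 3)) := by
  have hHs : Tendsto (fun T : ℕ => Hs T) atTop (nhds (π^2/6)) := by
    have h := hasSum_zeta_two.tendsto_sum_nat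
    have heq : ∀ T : ℕ, Hs T = ∑ i ∈ range (T+1), (1:ℝ)/(i:ℝ)^2 := by
      intro T
      rw [Finset.sum_range_succ']
      push_cast
      simp [Hs]
    have h2 : Tendsto (fun T : ℕ => ∑ i ∈ range (T+1), (1:ℝ)/(i:ℝ)^2) atTop (nhds (π^2/6)) :=
      h.comp (tendsto_add_atTop_nat 1)
    exact h2.congr (fun T => (heq T).symm)
  have hb : Tendsto (fun T : ℕ => (T:ℝ) - 1) atTop atTop := by
    have := tendsto_natCast_atTop_atTop (R := ℝ)
    exact tendsto_atTop_add_const_right atTop (-1) this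
  have hinv : Tendsto (fun T : ℕ => ((T:ℝ)-1)⁻¹) atTop (nhds 0) := hb.inv_tendsto_atTop
  have hratio : Tendsto (fun T : ℕ => (T:ℝ)/((T:ℝ)-1)) atTop (nhds 1) := by
    have h1 : Tendsto (fun T : ℕ => 1 + ((T:ℝ)-1)⁻¹) atTop (nhds 1) := by
      have hc : Tendsto (fun _ : ℕ => (1:ℝ)) atTop (nhds 1) := tendsto_const_nhds
      simpa using hc.add hinv
    apply h1.congr'
    filter_upwards [eventually_ge_atTop 2] with T hT
    have h2 : ((T:ℝ) - 1) ≠ 0 := by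
      have : (2:ℝ) ≤ T := by exact_mod_cast hT
      intro hc; rw [sub_eq_zero] at hc; rw [hc] at this; norm_num at this
    field_simp
    ring
  have hmain : Tendsto (fun T : ℕ =>
      ((T:ℝ)/((T:ℝ)-1))^2 * (2 * Hs T - 3) + 2*((T:ℝ)-1)⁻¹ + (((T:ℝ)-1)⁻¹)^2)
      atTop (nhds (π^2/3 - 3)) := by
    have h := ((hratio.pow 2).mul ((hHs.const_mul 2).sub (tendsto_const_nhds (x := (3:ℝ)) : Tendsto (fun _ : ℕ => (3:ℝ)) atTop (nhds 3)))).add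
      ((hinv.const_mul 2).add (hinv.pow 2))
    have : (1:ℝ)^2 * (2 * (π^2/6) - 3) + (2*0 + 0^2) = π^2/3 - 3 := by ring
    rw [this] at h
    exact h.congr (fun T => by ring)
  apply hmain.congr'
  filter_upwards [eventually_ge_atTop 2] with T hT
  have hT1 : ((T:ℝ) - 1) ≠ 0 := by
    have : (2:ℝ) ≤ T := by exact_mod_cast hT
    intro hc; rw [sub_eq_zero] at hc; rw [hc] at this; norm_num at this
  rw [key T hT]
  field_simp
  ring
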